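/- Let O be a discrete valuation ring with uniformizer λ and fraction field K, let t be a natural number, and let u be a unit of O with u ≠ 1 such that u − 1 ∈ (λ^s) but u − 1 ∉ (λ^{s+1}) for a natural number s. Consider the O-module M := (K/O) × (O/(λ^t)) × (O/(λ^t)) and the O-linear endomorphism φ of M given by φ(x, y, z) = (u·x, y, u⁻¹·z). Then: (i) the kernel of φ − 1 is isomorphic as an O-module to O/(λ^s) × O/(λ^t) × O/(λ^{min(s,t)}); and (ii) the cokernel M/(φ − 1)M is isomorphic as an O-module to O/(λ^t) × O/(λ^{min(s,t)}). -/

import Mathlib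

open LinearMap Submodule

section Aux
variable {R M N : Type*} [CommRing R] [AddCommGroup M] [AddCommGroup N] [Module R M] [Module R N]

/-- product submodule equiv product of submodules -/
def myProdEquiv (p : Submodule R M) (q : Submodule R N) : ↥(p.prod q) ≃ₗ[R] p × q where
  toFun x := (⟨x.1.1, x.2.1⟩, ⟨x.1.2, x.2.2⟩)
  invFun x := ⟨(x.1.1, x.2.1), ⟨x.1.2, x.2.2⟩⟩
  left_inv _ := rfl
  right_inv _ := rfl
  map_add' _ _ := rfl
  map_smul' _ _ := rfl

noncomputable def myQuotProdEquiv (p : Submodule R M) (q : Submodule R N) :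
    ((M × N) ⧸ p.prod q) ≃ₗ[R] (M ⧸ p) × (N ⧸ q) :=
  (Submodule.quotEquivOfEq _ _ (by rw [LinearMap.ker_prodMap, Submodule.ker_mkQ, Submodule.ker_mkQ])).trans
    (LinearMap.quotKerEquivOfSurjective (p.mkQ.prodMap q.mkQ)
      ((Submodule.mkQ_surjective p).prodMap (Submodule.mkQ_surjective q)))

theorem my_range_prodMap {M₂ N₂ : Type*} [AddCommGroup M₂] [AddCommGroup N₂] [Module R M₂]
    [Module R N₂] (f : M →ₗ[R] M₂) (g : N →ₗ[R] N₂) :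
    LinearMap.range (f.prodMap g) = (LinearMap.range f).prod (LinearMap.range g) := by
  ext ⟨x, y⟩
  simp only [LinearMap.mem_range, Submodule.mem_prod, LinearMap.prodMap_apply, Prod.mk.injEq,
    Prod.exists]
  constructor
  · rintro ⟨a, b, h1, h2⟩; exact ⟨⟨a, h1⟩, ⟨b, h2⟩⟩
  · rintro ⟨⟨a, h1⟩, ⟨b, h2⟩⟩; exact ⟨a, b, h1, h2⟩

theorem my_ker_smul_unit (a w : R) (hw : IsUnit w) :
    LinearMap.ker ((w * a) • (LinearMap.id : M →ₗ[R] M)) =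
      LinearMap.ker (a • (LinearMap.id : M →ₗ[R] M)) := by
  ext x
  simp only [LinearMap.mem_ker, LinearMap.smul_apply, LinearMap.id_coe, id_eq, mul_smul]
  obtain ⟨u, rfl⟩ := hw
  constructor
  · intro h
    have := congrArg (fun y => (↑u⁻¹ : R) • y) h
    simpa [smul_smul] using this
  · intro h; rw [h, smul_zero]

theorem my_range_smul_unit (a w : R) (hw : IsUnit w) :
    LinearMap.range ((w * a) • (LinearMap.id : M →ₗ[R] M)) =
      LinearMap.range (a • (LinearMap.id : M →ₗ[R] M)) := by
  obtain ⟨u, rfl⟩ := hw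
  ext x
  simp only [LinearMap.mem_range, LinearMap.smul_apply, LinearMap.id_coe, id_eq]
  constructor
  · rintro ⟨y, rfl⟩; exact ⟨(↑u : R) • y, by rw [mul_comm, mul_smul]⟩
  · rintro ⟨y, rfl⟩; exact ⟨(↑u⁻¹ : R) • y, by rw [smul_smul]; congr 1; rw [mul_comm (↑u : R) a, mul_assoc, Units.mul_inv, mul_one]⟩

def myPUnitProd (X : Type*) [AddCommGroup X] [Module R X] (S : Type*) [AddCommGroup S]
    [Module R S] [Subsingleton S] : (S × X) ≃ₗ[R] X :=
  { LinearMap.snd R S X with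
    invFun := fun x => (0, x)
    left_inv := fun p => by ext; exact Subsingleton.elim _ _; rfl
    right_inv := fun _ => rfl }

end Aux

open LinearMap Submodule

section DVR
variable {O : Type*} [CommRing O] [IsDomain O] [IsDiscreteValuationRing O]

theorem my_unit_factor (ϖ : O) (hϖ : Irreducible ϖ) (s : ℕ) (v : O)
    (hv : v ∈ Ideal.span {ϖ ^ s}) (hv' : v ∉ Ideal.span {ϖ ^ (s + 1)}) :
    ∃ w : O, IsUnit w ∧ v = w * ϖ ^ s := by
  obtain ⟨d, rfl⟩ := (Ideal.mem_span_singleton').mp hv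
  refine ⟨d, ?_, rfl⟩
  by_contra h
  have hd : d ∈ IsLocalRing.maximalIdeal O := (IsLocalRing.mem_maximalIdeal d).mpr h
  rw [show IsLocalRing.maximalIdeal O = Ideal.span {ϖ} from
    (IsDiscreteValuationRing.irreducible_iff_uniformizer ϖ).mp hϖ,
    Ideal.mem_span_singleton] at hd
  obtain ⟨e, rfl⟩ := hd
  exact hv' (Ideal.mem_span_singleton.mpr ⟨e, by ring⟩)

theorem my_range_smul_id (a : O) :
    LinearMap.range (a • (LinearMap.id : O →ₗ[O] O)) = Ideal.span {a} := by
  ext x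
  simp only [LinearMap.mem_range, LinearMap.smul_apply, LinearMap.id_coe, id_eq, smul_eq_mul,
    Ideal.mem_span_singleton]
  exact ⟨fun ⟨y, hy⟩ => ⟨y, hy.symm⟩, fun ⟨y, hy⟩ => ⟨y, hy.symm⟩⟩

variable (ϖ : O) (hϖ : Irreducible ϖ)

noncomputable def kerTorEquiv (s t : ℕ) :
    ↥(LinearMap.ker ((ϖ ^ s : O) •
        (LinearMap.id : (O ⧸ Ideal.span {ϖ ^ t}) →ₗ[O] (O ⧸ Ideal.span {ϖ ^ t}))))
      ≃ₗ[O] O ⧸ Ideal.span {ϖ ^ min s t} := by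
  set m := min s t with hm
  set f : O →ₗ[O] O ⧸ Ideal.span {ϖ ^ t} :=
    (Ideal.span {ϖ ^ t}).mkQ ∘ₗ ((ϖ ^ (t - m)) • LinearMap.id) with hf
  have hpow : ϖ ^ (t - m) * ϖ ^ m = ϖ ^ t := by
    rw [← pow_add]; congr 1; omega
  have hne : ϖ ^ (t - m) ≠ 0 := pow_ne_zero _ hϖ.ne_zero
  have hker : LinearMap.ker f = Ideal.span {ϖ ^ m} := by
    ext x
    simp only [hf, LinearMap.mem_ker, LinearMap.comp_apply, LinearMap.smul_apply,
      LinearMap.id_coe, id_eq, smul_eq_mul, Submodule.mkQ_apply,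
      Submodule.Quotient.mk_eq_zero, Ideal.mem_span_singleton]
    rw [← hpow, mul_dvd_mul_iff_left hne]
  have hrange : LinearMap.range f = LinearMap.ker ((ϖ ^ s : O) •
      (LinearMap.id : (O ⧸ Ideal.span {ϖ ^ t}) →ₗ[O] (O ⧸ Ideal.span {ϖ ^ t}))) := by
    apply le_antisymm
    · rintro _ ⟨x, rfl⟩
      simp only [hf, LinearMap.mem_ker, LinearMap.comp_apply, LinearMap.smul_apply,
        LinearMap.id_coe, id_eq, smul_eq_mul, Submodule.mkQ_apply]
      rw [← Submodule.Quotient.mk_smul, Submodule.Quotient.mk_eq_zero]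
      rw [Ideal.mem_span_singleton, smul_eq_mul, ← mul_assoc, ← pow_add]
      have h1 : s + (t - m) = (s - m) + t := by omega
      exact ⟨ϖ ^ (s - m) * x, by rw [h1, pow_add, mul_assoc, mul_comm (ϖ ^ t)]; ring⟩
    · intro y hy
      obtain ⟨x, rfl⟩ := Submodule.mkQ_surjective _ y
      simp only [LinearMap.mem_ker, LinearMap.smul_apply, LinearMap.id_coe, id_eq,
        Submodule.mkQ_apply, ← Submodule.Quotient.mk_smul, Submodule.Quotient.mk_eq_zero,
        smul_eq_mul, Ideal.mem_span_singleton] at hy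
      have hdvd : ϖ ^ (t - m) ∣ x := by
        rcases le_total s t with h | h
        · have hms : m = s := hm.trans (min_eq_left h)
          have hy2 : ϖ ^ s * ϖ ^ (t - s) ∣ ϖ ^ s * x := by
            rwa [← pow_add, Nat.add_sub_cancel' h]
          rw [mul_dvd_mul_iff_left (pow_ne_zero s hϖ.ne_zero)] at hy2
          rw [hms]; exact hy2
        · have : t - m = 0 := by omega
          rw [this, pow_zero]; exact one_dvd _
      obtain ⟨z, rfl⟩ := hdvd
      exact ⟨z, by simp [hf]⟩
  exact ((Submodule.quotEquivOfEq _ _ hker.symm).trans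
    (f.quotKerEquivRange.trans (LinearEquiv.ofEq _ _ hrange))).symm

theorem my_sup_span_pow (s t : ℕ) :
    Ideal.span {ϖ ^ s} ⊔ Ideal.span {ϖ ^ t} = Ideal.span {ϖ ^ min s t} := by
  rcases le_total s t with h | h
  · rw [min_eq_left h, sup_eq_left]
    exact Ideal.span_singleton_le_span_singleton.mpr (pow_dvd_pow ϖ h)
  · rw [min_eq_right h, sup_eq_right]
    exact Ideal.span_singleton_le_span_singleton.mpr (pow_dvd_pow ϖ h)

noncomputable def cokerTorEquiv (s t : ℕ) :
    ((O ⧸ Ideal.span {ϖ ^ t}) ⧸ LinearMap.range ((ϖ ^ s : O) •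
        (LinearMap.id : (O ⧸ Ideal.span {ϖ ^ t}) →ₗ[O] (O ⧸ Ideal.span {ϖ ^ t}))))
      ≃ₗ[O] O ⧸ Ideal.span {ϖ ^ min s t} := by
  set r := LinearMap.range ((ϖ ^ s : O) •
    (LinearMap.id : (O ⧸ Ideal.span {ϖ ^ t}) →ₗ[O] (O ⧸ Ideal.span {ϖ ^ t}))) with hr
  set g : O →ₗ[O] ((O ⧸ Ideal.span {ϖ ^ t}) ⧸ r) := r.mkQ ∘ₗ (Ideal.span {ϖ ^ t}).mkQ with hg
  have hsurj : Function.Surjective g :=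
    (Submodule.mkQ_surjective r).comp (Submodule.mkQ_surjective _)
  have hrQ : r = Submodule.map (Ideal.span {ϖ ^ t}).mkQ (Ideal.span {ϖ ^ s}) := by
    have hcomm : ((ϖ ^ s : O) • (LinearMap.id :
        (O ⧸ Ideal.span {ϖ ^ t}) →ₗ[O] (O ⧸ Ideal.span {ϖ ^ t}))) ∘ₗ (Ideal.span {ϖ ^ t}).mkQ
        = (Ideal.span {ϖ ^ t}).mkQ ∘ₗ ((ϖ ^ s : O) • LinearMap.id) := by
      refine LinearMap.ext fun x => ?_
      simp only [LinearMap.comp_apply, LinearMap.smul_apply, LinearMap.id_coe, id_eq,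
        Submodule.mkQ_apply]
      exact (Submodule.Quotient.mk_smul _ _ _).symm
    rw [hr, ← my_range_smul_id (ϖ ^ s), ← LinearMap.range_comp, ← hcomm, LinearMap.range_comp,
      Submodule.range_mkQ, Submodule.map_top]
  have hkerg : LinearMap.ker g = Ideal.span {ϖ ^ min s t} := by
    rw [hg, LinearMap.ker_comp, Submodule.ker_mkQ, hrQ, Submodule.comap_map_eq,
      Submodule.ker_mkQ, my_sup_span_pow ϖ]
  exact (LinearMap.quotKerEquivOfSurjective g hsurj).symm.trans
    (Submodule.quotEquivOfEq _ _ hkerg)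

end DVR

open LinearMap Submodule

section Frac
variable {O : Type*} [CommRing O] [IsDomain O] [IsDiscreteValuationRing O]
  (K : Type*) [Field K] [Algebra O K] [IsFractionRing O K]

noncomputable def fracDivMap (a : O) : O →ₗ[O] (K ⧸ LinearMap.range (Algebra.linearMap O K)) :=
  (LinearMap.range (Algebra.linearMap O K)).mkQ ∘ₗ
    ((LinearMap.mul K K (algebraMap O K a)⁻¹).restrictScalars O) ∘ₗ Algebra.linearMap O K

variable {K}

theorem fracDivMap_apply (a x : O) :
    fracDivMap K a x = Submodule.Quotient.mk ((algebraMap O K a)⁻¹ * algebraMap O K x) := rfl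

variable (ha : a ≠ 0)

theorem ker_fracDivMap (a : O) (ha : a ≠ 0) :
    LinearMap.ker (fracDivMap K a) = Ideal.span {a} := by
  have hinj : Function.Injective (algebraMap O K) := IsFractionRing.injective O K
  have hane : algebraMap O K a ≠ 0 := fun h => ha (hinj (by rw [h, map_zero]))
  ext x
  rw [LinearMap.mem_ker, fracDivMap_apply, Submodule.Quotient.mk_eq_zero,
    Ideal.mem_span_singleton]
  constructor
  · rintro ⟨y, hy⟩
    simp only [Algebra.linearMap_apply] at hy
    refine ⟨y, hinj ?_⟩
    rw [map_mul, hy, ← mul_assoc, mul_inv_cancel₀ hane, one_mul]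
  · rintro ⟨y, rfl⟩
    exact ⟨y, by simp only [Algebra.linearMap_apply, map_mul, ← mul_assoc,
      inv_mul_cancel₀ hane, one_mul]⟩

theorem range_fracDivMap (a : O) (ha : a ≠ 0) :
    LinearMap.range (fracDivMap K a) = LinearMap.ker ((a : O) •
      (LinearMap.id : (K ⧸ LinearMap.range (Algebra.linearMap O K)) →ₗ[O]
        (K ⧸ LinearMap.range (Algebra.linearMap O K)))) := by
  have hinj : Function.Injective (algebraMap O K) := IsFractionRing.injective O K
  have hane : algebraMap O K a ≠ 0 := fun h => ha (hinj (by rw [h, map_zero]))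
  apply le_antisymm
  · rintro _ ⟨x, rfl⟩
    rw [LinearMap.mem_ker, LinearMap.smul_apply, LinearMap.id_coe, id_eq, fracDivMap_apply,
      ← Submodule.Quotient.mk_smul, Submodule.Quotient.mk_eq_zero]
    refine ⟨x, ?_⟩
    rw [Algebra.linearMap_apply, Algebra.smul_def, ← mul_assoc, mul_inv_cancel₀ hane, one_mul]
  · intro y hy
    obtain ⟨k, rfl⟩ := Submodule.mkQ_surjective _ y
    rw [LinearMap.mem_ker, LinearMap.smul_apply, LinearMap.id_coe, id_eq, Submodule.mkQ_apply,
      ← Submodule.Quotient.mk_smul, Submodule.Quotient.mk_eq_zero] at hy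
    obtain ⟨z, hz⟩ := hy
    refine ⟨z, ?_⟩
    rw [fracDivMap_apply, Submodule.mkQ_apply]
    congr 1
    have hz' : algebraMap O K z = algebraMap O K a * k := by
      rw [← Algebra.linearMap_apply, hz, Algebra.smul_def]
    rw [hz', ← mul_assoc, inv_mul_cancel₀ hane, one_mul]

theorem range_top_frac (a : O) (ha : a ≠ 0) :
    LinearMap.range ((a : O) •
      (LinearMap.id : (K ⧸ LinearMap.range (Algebra.linearMap O K)) →ₗ[O]
        (K ⧸ LinearMap.range (Algebra.linearMap O K)))) = ⊤ := by
  have hinj : Function.Injective (algebraMap O K) := IsFractionRing.injective O K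
  have hane : algebraMap O K a ≠ 0 := fun h => ha (hinj (by rw [h, map_zero]))
  rw [LinearMap.range_eq_top]
  intro y
  obtain ⟨k, rfl⟩ := Submodule.mkQ_surjective _ y
  refine ⟨Submodule.Quotient.mk ((algebraMap O K a)⁻¹ * k), ?_⟩
  rw [LinearMap.smul_apply, LinearMap.id_coe, id_eq, ← Submodule.Quotient.mk_smul,
    Submodule.mkQ_apply]
  congr 1
  rw [Algebra.smul_def, ← mul_assoc, mul_inv_cancel₀ hane, one_mul]

noncomputable def kerFracEquiv (a : O) (ha : a ≠ 0) :
    ↥(LinearMap.ker ((a : O) •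
      (LinearMap.id : (K ⧸ LinearMap.range (Algebra.linearMap O K)) →ₗ[O]
        (K ⧸ LinearMap.range (Algebra.linearMap O K))))) ≃ₗ[O] O ⧸ Ideal.span {a} :=
  ((Submodule.quotEquivOfEq _ _ (ker_fracDivMap a ha).symm).trans
    ((fracDivMap K a).quotKerEquivRange.trans
      (LinearEquiv.ofEq _ _ (range_fracDivMap a ha)))).symm

end Frac

set_option maxHeartbeats 1000000 in
/-- **Frobenius invariants/coinvariants computation (Section 3.2 of the paper).**
Let `O` be a DVR with uniformizer `ϖ` and fraction field `K`, `t ∈ ℕ`, and `u ∈ O^×` a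
unit with `u ≠ 1` and `u − 1 ∈ (ϖ^s) \ (ϖ^{s+1})`.  For the `O`-module
`M := K/O × O/(ϖ^t) × O/(ϖ^t)` and the endomorphism `φ(x, y, z) = (u·x, y, u⁻¹·z)`:
(i) `ker(φ − 1) ≅ O/(ϖ^s) × O/(ϖ^t) × O/(ϖ^{min(s,t)})`; and
(ii) `M/(φ − 1)M ≅ O/(ϖ^t) × O/(ϖ^{min(s,t)})`. -/
theorem stmt_7 {O : Type*} [CommRing O] [IsDomain O] [IsDiscreteValuationRing O]
    (K : Type*) [Field K] [Algebra O K] [IsFractionRing O K]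
    (ϖ : O) (hϖ : Irreducible ϖ) (t s : ℕ) (u : Oˣ) (hu1 : u ≠ 1)
    (hus : (u : O) - 1 ∈ Ideal.span {ϖ ^ s})
    (hus' : (u : O) - 1 ∉ Ideal.span {ϖ ^ (s + 1)}) :
    ∀ φ : ((K ⧸ LinearMap.range (Algebra.linearMap O K)) ×
          (O ⧸ Ideal.span {ϖ ^ t}) × (O ⧸ Ideal.span {ϖ ^ t})) →ₗ[O]
        ((K ⧸ LinearMap.range (Algebra.linearMap O K)) ×
          (O ⧸ Ideal.span {ϖ ^ t}) × (O ⧸ Ideal.span {ϖ ^ t})),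
      φ = LinearMap.prodMap ((u : O) • LinearMap.id)
            (LinearMap.prodMap LinearMap.id (((u⁻¹ : Oˣ) : O) • LinearMap.id)) →
      Nonempty (↥(LinearMap.ker (φ - LinearMap.id)) ≃ₗ[O]
          (O ⧸ Ideal.span {ϖ ^ s}) × (O ⧸ Ideal.span {ϖ ^ t}) ×
            (O ⧸ Ideal.span {ϖ ^ (min s t)})) ∧
      Nonempty ((((K ⧸ LinearMap.range (Algebra.linearMap O K)) ×
            (O ⧸ Ideal.span {ϖ ^ t}) × (O ⧸ Ideal.span {ϖ ^ t})) ⧸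
            LinearMap.range (φ - LinearMap.id)) ≃ₗ[O]
          (O ⧸ Ideal.span {ϖ ^ t}) × (O ⧸ Ideal.span {ϖ ^ (min s t)})) := by
  intro φ hφ
  obtain ⟨c1, hc1u, hc1⟩ := my_unit_factor ϖ hϖ s _ hus hus'
  have huu : ((u⁻¹ : Oˣ) : O) * (u : O) = 1 := by
    exact u.inv_mul
  have hc2u : IsUnit (-(((u⁻¹ : Oˣ) : O)) * c1) := (IsUnit.neg u⁻¹.isUnit).mul hc1u
  have hc2 : ((u⁻¹ : Oˣ) : O) - 1 = (-(((u⁻¹ : Oˣ) : O)) * c1) * ϖ ^ s := by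
    linear_combination (-(((u⁻¹ : Oˣ) : O))) * hc1 + huu
  have hane : (ϖ : O) ^ s ≠ 0 := pow_ne_zero _ hϖ.ne_zero
  have hsub : φ - LinearMap.id =
      LinearMap.prodMap (((u : O) - 1) • LinearMap.id)
        (LinearMap.prodMap (0 : (O ⧸ Ideal.span {ϖ ^ t}) →ₗ[O] (O ⧸ Ideal.span {ϖ ^ t}))
          ((((u⁻¹ : Oˣ) : O) - 1) • LinearMap.id)) := by
    subst hφ
    refine LinearMap.ext fun x => ?_
    simp [LinearMap.prodMap_apply, sub_smul, Prod.ext_iff]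
  have hkereq : LinearMap.ker (φ - LinearMap.id) =
      (LinearMap.ker ((ϖ ^ s : O) • (LinearMap.id :
          (K ⧸ LinearMap.range (Algebra.linearMap O K)) →ₗ[O]
          (K ⧸ LinearMap.range (Algebra.linearMap O K))))).prod
        ((⊤ : Submodule O (O ⧸ Ideal.span {ϖ ^ t})).prod
          (LinearMap.ker ((ϖ ^ s : O) • (LinearMap.id :
            (O ⧸ Ideal.span {ϖ ^ t}) →ₗ[O] (O ⧸ Ideal.span {ϖ ^ t}))))) := by
    rw [hsub, LinearMap.ker_prodMap, LinearMap.ker_prodMap, LinearMap.ker_zero, hc1, hc2,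
      my_ker_smul_unit (ϖ ^ s) c1 hc1u, my_ker_smul_unit (ϖ ^ s) _ hc2u]
  have hrangeeq : LinearMap.range (φ - LinearMap.id) =
      (⊤ : Submodule O (K ⧸ LinearMap.range (Algebra.linearMap O K))).prod
        ((⊥ : Submodule O (O ⧸ Ideal.span {ϖ ^ t})).prod
          (LinearMap.range ((ϖ ^ s : O) • (LinearMap.id :
            (O ⧸ Ideal.span {ϖ ^ t}) →ₗ[O] (O ⧸ Ideal.span {ϖ ^ t}))))) := by
    rw [hsub, my_range_prodMap, my_range_prodMap, LinearMap.range_zero, hc1, hc2,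
      my_range_smul_unit (ϖ ^ s) c1 hc1u, my_range_smul_unit (ϖ ^ s) _ hc2u,
      range_top_frac _ hane]
  constructor
  · exact ⟨(LinearEquiv.ofEq _ _ hkereq).trans ((myProdEquiv _ _).trans
      (LinearEquiv.prodCongr (kerFracEquiv (ϖ ^ s) hane)
        ((myProdEquiv _ _).trans (LinearEquiv.prodCongr Submodule.topEquiv
          (kerTorEquiv ϖ hϖ s t)))))⟩
  · haveI : Subsingleton ((K ⧸ LinearMap.range (Algebra.linearMap O K)) ⧸
        (⊤ : Submodule O (K ⧸ LinearMap.range (Algebra.linearMap O K)))) :=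
      Submodule.Quotient.subsingleton_iff.mpr rfl
    exact ⟨(Submodule.quotEquivOfEq _ _ hrangeeq).trans ((myQuotProdEquiv _ _).trans
      ((LinearEquiv.prodCongr (LinearEquiv.refl O _) (myQuotProdEquiv _ _)).trans
        ((myPUnitProd _ _).trans (LinearEquiv.prodCongr
          (Submodule.quotEquivOfEqBot _ rfl) (cokerTorEquiv ϖ s t)))))⟩
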